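/- Let G be a finite group satisfying o(xy) ≤ max{o(x), o(y)} for all x, y ∈ G, such that every nontrivial element of G has prime order, and suppose G is not a p-group. If x ∈ G has order p (the prime with F(G) = O_p(G)) and y ∈ G has order q ≠ p, then o(xy) = q. -/

import Mathlib

/-- The Fitting subgroup: the largest normal nilpotent subgroup of `G`. -/
def fittingSubgroup (G : Type*) [Group G] : Subgroup G :=
  sSup {H : Subgroup G | H.Normal ∧ Group.IsNilpotent H}

/-- The `p`-core: the largest normal `p`-subgroup of `G`. -/
def pCore (p : ℕ) (G : Type*) [Group G] : Subgroup G :=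
  sSup {H : Subgroup G | H.Normal ∧ IsPGroup p H}

lemma pCore_spec {G : Type*} [Group G] [Finite G] (p : ℕ) :
    (pCore p G).Normal ∧ IsPGroup p (pCore p G) := by
  set S := {H : Subgroup G | H.Normal ∧ IsPGroup p H} with hS
  have hfin : S.Finite := Set.toFinite S
  have hne : S.Nonempty := ⟨⊥, inferInstance, IsPGroup.of_bot⟩
  obtain ⟨M, hM, hmax⟩ : ∃ M ∈ S, ∀ M' ∈ S, id M ≤ id M' → id M = id M' := by
    obtain ⟨M, hM, hmax⟩ := hfin.exists_maximal hne
    exact ⟨M, hM, fun M' hM' hle => le_antisymm hle (hmax hM' hle)⟩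
  have hle : ∀ H ∈ S, H ≤ M := by
    intro H hH
    have : H ⊔ M ∈ S := by
      haveI := hM.1
      haveI := hH.1
      exact ⟨Subgroup.sup_normal H M, IsPGroup.to_sup_of_normal_right hH.2 hM.2⟩
    have heq := hmax _ this (le_sup_right (a := H))
    simpa [id] using le_sup_left.trans_eq heq.symm
  have hcore : pCore p G = M := le_antisymm (sSup_le hle) (le_sSup hM)
  rw [hcore]; exact hM

theorem stmt_18 {G : Type*} [Group G] [Finite G]
    (h : ∀ x y : G, orderOf (x * y) ≤ max (orderOf x) (orderOf y))
    (hprime : ∀ g : G, g ≠ 1 → (orderOf g).Prime)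
    (hnp : ¬ ∃ r : ℕ, r.Prime ∧ IsPGroup r G)
    {p q : ℕ} (hp : p.Prime) (hq : q.Prime) (hpq : q ≠ p)
    (hFit : fittingSubgroup G = pCore p G)
    {x y : G} (hx : orderOf x = p) (hxF : x ∈ fittingSubgroup G)
    (hy : orderOf y = q) :
    orderOf (x * y) = q := by
  obtain ⟨hNnormal, hNp⟩ := pCore_spec (G := G) p
  haveI := hNnormal
  rw [hFit] at hxF
  set N := pCore p G
  -- y is not in N
  have hyN : y ∉ N := by
    intro hyN
    obtain ⟨k, hk⟩ := hNp ⟨y, hyN⟩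
    have hdvd : orderOf (⟨y, hyN⟩ : N) ∣ p ^ k := orderOf_dvd_of_pow_eq_one hk
    rw [Subgroup.orderOf_mk, hy] at hdvd
    exact hpq ((Nat.prime_dvd_prime_iff_eq hq hp).mp (hq.dvd_of_dvd_pow hdvd))
  -- consider the quotient map
  set φ := QuotientGroup.mk' N with hφ
  have hφx : φ x = 1 := (QuotientGroup.eq_one_iff x).mpr hxF
  have hφxy : φ (x * y) = φ y := by
    rw [map_mul, hφx, one_mul]
  have hdvd1 : orderOf (φ y) ∣ q := hy ▸ orderOf_map_dvd φ y
  have hdvd2 : orderOf (φ (x * y)) ∣ orderOf (x * y) := orderOf_map_dvd φ (x * y)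
  have hφy_ne : φ y ≠ 1 := fun hc => hyN ((QuotientGroup.eq_one_iff y).mp hc)
  have hordφy : orderOf (φ y) = q := by
    rcases (Nat.dvd_prime hq).mp hdvd1 with h1 | h1
    · exact absurd (orderOf_eq_one_iff.mp h1) hφy_ne
    · exact h1
  have hqdvd : q ∣ orderOf (x * y) := by
    rw [hφxy, hordφy] at hdvd2; exact hdvd2
  have hne1 : (x * y) ≠ 1 := by
    intro hc
    have : orderOf (x * y) = 1 := by rw [hc, orderOf_one]
    rw [this] at hqdvd
    exact hq.one_lt.ne' (Nat.dvd_one.mp hqdvd)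
  have := hprime (x * y) hne1
  exact ((Nat.prime_dvd_prime_iff_eq hq this).mp hqdvd).symm
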